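/- For any integers m, n, ε the word x₁^m x₂^ε x₁^n x₂^{−ε} in F_2 is inverted by the automorphism sending x₁ ↦ x₁^{−1} and x₂ ↦ x₁^m x₂ x₁^{−m}; in particular it is achiral. -/

import Mathlib

theorem word_x1m_x2e_x1n_x2me_inverted (m n ε : ℤ) :
    ∃ σ : FreeGroup (Fin 2) ≃* FreeGroup (Fin 2),
      σ (FreeGroup.of 0) = (FreeGroup.of 0)⁻¹ ∧
      σ (FreeGroup.of 1) =
        FreeGroup.of 0 ^ m * FreeGroup.of 1 * FreeGroup.of 0 ^ (-m) ∧
      σ (FreeGroup.of 0 ^ m * FreeGroup.of 1 ^ ε *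
            FreeGroup.of 0 ^ n * FreeGroup.of 1 ^ (-ε)) =
        (FreeGroup.of 0 ^ m * FreeGroup.of 1 ^ ε *
            FreeGroup.of 0 ^ n * FreeGroup.of 1 ^ (-ε))⁻¹ ∧
      ∃ ψ : FreeGroup (Fin 2) →* FreeGroup (Fin 2),
        ψ (FreeGroup.of 0 ^ m * FreeGroup.of 1 ^ ε *
              FreeGroup.of 0 ^ n * FreeGroup.of 1 ^ (-ε)) =
          (FreeGroup.of 0 ^ m * FreeGroup.of 1 ^ ε *
              FreeGroup.of 0 ^ n * FreeGroup.of 1 ^ (-ε))⁻¹ := by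
  set a : FreeGroup (Fin 2) := FreeGroup.of 0 with ha
  set b : FreeGroup (Fin 2) := FreeGroup.of 1 with hb
  set f : FreeGroup (Fin 2) →* FreeGroup (Fin 2) :=
    FreeGroup.lift ![a⁻¹, a ^ m * b * a ^ (-m)] with hf
  have hf0 : f a = a⁻¹ := by simp [hf, ha]
  have hf1 : f b = a ^ m * b * a ^ (-m) := by simp [hf, ha, hb]
  have hinv : ∀ x, f (f x) = x := by
    intro x
    have : f.comp f = MonoidHom.id _ := by
      apply FreeGroup.ext_hom
      intro i
      fin_cases i <;>
        simp [← ha, ← hb, hf0, hf1, map_mul, map_zpow, map_inv] <;> group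
    calc f (f x) = (f.comp f) x := rfl
      _ = x := by rw [this]; rfl
  have key : ∀ k : ℤ, (a ^ m * b * a ^ (-m)) ^ k = a ^ m * b ^ k * a ^ (-m) := by
    intro k
    rw [zpow_neg, conj_zpow]
  refine ⟨⟨⟨f, f, hinv, hinv⟩, map_mul f⟩, hf0, hf1, ?_, ?_⟩
  · show f _ = _
    simp only [map_mul, map_zpow, hf0, hf1, key]
    group
  · refine ⟨f, ?_⟩
    simp only [map_mul, map_zpow, hf0, hf1, key]
    group
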